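/- Fix u ≥ 1, a sequence ε_n ≥ 0 tending to 0, and a strictly increasing sequence of integers {m_n}_{n≥1} with m_n = u·n + O(ε_n·n). Then there exists n₀ such that for all n ≥ n₀ and all integers ν with (u+1)·n/(u+2) < ν < n, one has P(T_n − T_ν = m_n − m_ν) = 0. -/

import Mathlib

open MeasureTheory ProbabilityTheory Filter Finset

/-- `T n = ∑_{1 ≤ k ≤ n} k · Z k`. -/
def T {Ω : Type*} (Z : ℕ → Ω → ℕ) (n : ℕ) (ω : Ω) : ℕ :=
  ∑ k ∈ Finset.Icc 1 n, k * Z k ω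

theorem correlation_event_impossible
    {Ω : Type*} [MeasureSpace Ω] [IsProbabilityMeasure (ℙ : Measure Ω)]
    (Z : ℕ → Ω → ℕ) (hZmeas : ∀ k, Measurable (Z k))
    (hZindep : iIndepFun Z ℙ)
    (hZ1 : ∀ k : ℕ, 1 ≤ k → ℙ {ω | Z k ω = 1} = 1 / k)
    (hZ0 : ∀ k : ℕ, 1 ≤ k → ℙ {ω | Z k ω = 0} = 1 - 1 / k)
    (u : ℝ) (hu : 1 ≤ u)
    (ε : ℕ → ℝ) (hεpos : ∀ n, 0 ≤ ε n) (hεlim : Tendsto ε atTop (nhds 0))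
    (m : ℕ → ℤ) (hmono : ∀ n : ℕ, 1 ≤ n → m n < m (n + 1))
    (hm : ∃ K : ℝ, ∀ n : ℕ, 1 ≤ n → |(m n : ℝ) - u * n| ≤ K * (ε n * n)) :
    ∃ n₀ : ℕ, ∀ n : ℕ, n₀ ≤ n → ∀ ν : ℕ, 1 ≤ ν →
      (u + 1) * n / (u + 2) < (ν : ℝ) → ν < n →
      ℙ {ω | (T Z n ω : ℤ) - (T Z ν ω : ℤ) = m n - m ν} = 0 := by
  obtain ⟨K, hK⟩ := hm
  set K' : ℝ := max K 1 with hK'def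
  have hK1 : 1 ≤ K' := le_max_right _ _
  have hK'pos : 0 < K' := lt_of_lt_of_le one_pos hK1
  have hu2 : (0:ℝ) < u + 2 := by linarith
  set δ : ℝ := 1 / (2 * K' * (u + 2)) with hδdef
  have hδpos : 0 < δ := by positivity
  have hδ : δ * (2 * K' * (u + 2)) = 1 := by
    rw [hδdef]; field_simp
  obtain ⟨N, hN⟩ := Filter.eventually_atTop.mp (hεlim.eventually (gt_mem_nhds hδpos))
  refine ⟨3 * N + 3, fun n hn ν hν1 hνlo hνhi => ?_⟩
  have hn1 : 1 ≤ n := by omega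
  have hNn : N ≤ n := by omega
  have hx : (0:ℝ) ≤ (n:ℝ) := Nat.cast_nonneg n
  have hyx : (ν:ℝ) < n := by exact_mod_cast hνhi
  have hy' : (u + 1) * n < (ν:ℝ) * (u + 2) := (div_lt_iff₀ hu2).mp hνlo
  have hνN : N ≤ ν := by
    by_contra h
    push_neg at h
    have hνN' : (ν:ℝ) ≤ N := by exact_mod_cast h.le
    have hn3 : (3 * N + 3 : ℝ) ≤ n := by exact_mod_cast hn
    have hν0 : (0:ℝ) ≤ (ν:ℝ) := Nat.cast_nonneg ν
    nlinarith [mul_nonneg (by linarith : (0:ℝ) ≤ u + 1) (by linarith : (0:ℝ) ≤ (n:ℝ) - 3 * ν)]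
  have hεn : ε n < δ := hN n hNn
  have hεν : ε ν < δ := hN ν hνN
  have h1 := abs_le.mp (hK n hn1)
  have h2 := abs_le.mp (hK ν hν1)
  have hchain : ∀ k : ℕ, (k:ℝ) ≤ n → ε k < δ → K * (ε k * k) ≤ K' * (δ * n) := by
    intro k hkn hεk
    have h0 : (0:ℝ) ≤ (k:ℝ) := Nat.cast_nonneg k
    calc K * (ε k * k) ≤ K' * (ε k * k) :=
          mul_le_mul_of_nonneg_right (le_max_left K 1) (mul_nonneg (hεpos k) h0)
      _ ≤ K' * (δ * n) := by
          apply mul_le_mul_of_nonneg_left _ hK'pos.le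
          have := mul_le_mul hεk.le hkn h0 hδpos.le
          linarith
  have hb1 : (m n : ℝ) - u * n ≤ K' * (δ * n) := le_trans h1.2 (hchain n le_rfl hεn)
  have hb2 : u * ν - (m ν : ℝ) ≤ K' * (δ * n) := by
    have := h2.1
    have := hchain ν hyx.le hεν
    linarith
  have hmain : (m n : ℝ) - (m ν : ℝ) < ν := by
    nlinarith [mul_le_mul_of_nonneg_left hy'.le (by linarith : (0:ℝ) ≤ u),
      mul_nonneg (mul_nonneg hK'pos.le hδpos.le) hx, hδ, hb1, hb2, hyx, hy']
  have hmint : m n - m ν < (ν:ℤ) := by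
    have : ((m n - m ν : ℤ) : ℝ) < ((ν:ℤ) : ℝ) := by push_cast; linarith
    exact_mod_cast this
  -- positivity of m n - m ν
  have hmlt : ∀ b : ℕ, ν < b → m ν < m b := by
    intro b
    induction b with
    | zero => omega
    | succ b ih =>
      intro hb
      rcases Nat.lt_or_ge ν b with h | h
      · exact (ih h).trans (hmono b (by omega))
      · have hb' : ν = b := by omega
        subst hb'
        exact hmono ν hν1
  have hpos : 0 < m n - m ν := sub_pos.mpr (hmlt n hνhi)
  -- the event is empty
  have hT : ∀ ω, T Z n ω = T Z ν ω + ∑ k ∈ Finset.Ioc ν n, k * Z k ω := by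
    intro ω
    have hIcc : ∀ r : ℕ, Finset.Icc 1 r = Finset.Ioc 0 r := by
      intro r; rw [← Finset.Icc_add_one_left_eq_Ioc, zero_add]
    unfold T
    rw [hIcc, hIcc, ← Finset.sum_Ioc_consecutive _ (Nat.zero_le ν) hνhi.le]
  have hset : {ω : Ω | (T Z n ω : ℤ) - (T Z ν ω : ℤ) = m n - m ν} = ∅ := by
    ext ω
    simp only [Set.mem_setOf_eq, Set.mem_empty_iff_false, iff_false]
    intro heq
    have hTω := hT ω
    set S := ∑ k ∈ Finset.Ioc ν n, k * Z k ω with hS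
    have hcast : (S : ℤ) = m n - m ν := by
      rw [hTω] at heq
      push_cast at heq
      linarith
    rcases eq_or_ne S 0 with h | h
    · rw [h] at hcast; simp at hcast; omega
    · obtain ⟨k, hk, hkz⟩ : ∃ k ∈ Finset.Ioc ν n, Z k ω ≠ 0 := by
        by_contra hall
        push_neg at hall
        exact h (Finset.sum_eq_zero fun k hk => by rw [hall k hk, mul_zero])
      have hS1 : ν + 1 ≤ S := by
        calc ν + 1 ≤ k := (Finset.mem_Ioc.mp hk).1
          _ ≤ k * Z k ω := Nat.le_mul_of_pos_right k (Nat.pos_of_ne_zero hkz)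
          _ ≤ S := Finset.single_le_sum (f := fun i => i * Z i ω) (fun i _ => Nat.zero_le _) hk
      have : ((ν:ℤ) + 1) ≤ (S:ℤ) := by exact_mod_cast hS1
      omega
  rw [hset]
  exact measure_empty
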